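/- (Brezzi well-posedness of the abstract mixed problem, the tool behind Theorems 6, 7, 8.) Let X and Q be real Hilbert spaces, and let a : X × X → ℝ and b : X × Q → ℝ be bilinear forms that are bounded: |a(x,y)| ≤ Cₐ‖x‖‖y‖ and |b(y,q)| ≤ C_b‖y‖‖q‖ for all x, y ∈ X, q ∈ Q. Let X₀ := { x ∈ X : b(x,q) = 0 for all q ∈ Q }. Assume: (i) there is β > 0 such that for every q ∈ Q, sup over nonzero y ∈ X of b(y,q)/‖y‖ is at least β‖q‖; (ii) there is α > 0 such that for every x ∈ X₀, sup over nonzero y ∈ X₀ of a(x,y)/‖y‖ is at least α‖x‖, and for every y ∈ X₀, sup over nonzero x ∈ X₀ of a(x,y)/‖x‖ is at least α‖y‖. Then for every pair of continuous linear functionals h : X → ℝ and g : Q → ℝ there exists a unique pair (x, p) ∈ X × Q satisfying a(x,y) + b(y,p) = h(y) for all y ∈ X and b(x,q) = g(q) for all q ∈ Q; moreover there is a constant C depending only on α, β, Cₐ, C_b such that ‖x‖ + ‖p‖ ≤ C (‖h‖_{X*} + ‖g‖_{Q*}), where ‖·‖_{X*}, ‖·‖_{Q*} are operator norms of the functionals.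 -/

import Mathlib

open RealInnerProductSpace InnerProductSpace

/-- A bounded-below operator on a real Hilbert space with dense range is surjective. -/
lemma brezzi_aux_surj {E : Type*} [NormedAddCommGroup E] [InnerProductSpace ℝ E]
    [CompleteSpace E] (T : E →L[ℝ] E) (α : ℝ) (hα : 0 < α)
    (hlow : ∀ x, α * ‖x‖ ≤ ‖T x‖)
    (hdense : ∀ y : E, (∀ x, ⟪T x, y⟫ = 0) → y = 0) :
    Function.Surjective T := by
  have anti : AntilipschitzWith (α⁻¹).toNNReal T := by
    refine T.antilipschitz_of_bound fun x => ?_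
    rw [Real.coe_toNNReal _ (by positivity), inv_mul_eq_div, le_div_iff₀ hα]
    linarith [hlow x]
  have hcl : IsClosed (Set.range T) := anti.isClosed_range T.uniformContinuous
  have hclS : IsClosed ((LinearMap.range (T : E →ₗ[ℝ] E) : Submodule ℝ E) : Set E) := by
    rwa [LinearMap.coe_range]
  haveI := hclS.completeSpace_coe
  have htop : LinearMap.range (T : E →ₗ[ℝ] E) = ⊤ := by
    rw [← (LinearMap.range (T : E →ₗ[ℝ] E)).orthogonal_orthogonal]
    have h0 : (LinearMap.range (T : E →ₗ[ℝ] E))ᗮ = ⊥ := by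
      rw [Submodule.eq_bot_iff]
      intro y hy
      exact hdense y fun x =>
        (Submodule.mem_orthogonal _ y).mp hy (T x) (LinearMap.mem_range_self _ x)
    rw [h0, Submodule.bot_orthogonal_eq_top]
  exact LinearMap.range_eq_top.mp htop

lemma brezzi_aux_sq {t M : ℝ} (ht : 0 ≤ t) (hM : 0 ≤ M) (h : t * t ≤ M * t) : t ≤ M := by
  rcases eq_or_lt_of_le ht with h0 | h0
  · rw [← h0]; exact hM
  · exact le_of_mul_le_mul_right h h0

set_option maxHeartbeats 2000000 in
/-- Brezzi's theorem: well-posedness of the abstract mixed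
variational problem under boundedness and inf-sup conditions. -/
theorem brezzi_wellposedness
    {X Q : Type*}
    [NormedAddCommGroup X] [InnerProductSpace ℝ X] [CompleteSpace X]
    [NormedAddCommGroup Q] [InnerProductSpace ℝ Q] [CompleteSpace Q]
    (a : X →ₗ[ℝ] X →ₗ[ℝ] ℝ) (b : X →ₗ[ℝ] Q →ₗ[ℝ] ℝ)
    (Ca Cb : ℝ)
    (hCa : ∀ x y : X, |a x y| ≤ Ca * ‖x‖ * ‖y‖)
    (hCb : ∀ (y : X) (q : Q), |b y q| ≤ Cb * ‖y‖ * ‖q‖)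
    (β : ℝ) (hβ : 0 < β)
    (hb : ∀ q : Q, β * ‖q‖ ≤ ⨆ y : {y : X // y ≠ 0}, b (y : X) q / ‖(y : X)‖)
    (α : ℝ) (hα : 0 < α)
    (ha₁ : ∀ x : X, (∀ q : Q, b x q = 0) →
      α * ‖x‖ ≤ ⨆ y : {y : X // (∀ q : Q, b y q = 0) ∧ y ≠ 0},
        a x (y : X) / ‖(y : X)‖)
    (ha₂ : ∀ y : X, (∀ q : Q, b y q = 0) →
      α * ‖y‖ ≤ ⨆ x : {x : X // (∀ q : Q, b x q = 0) ∧ x ≠ 0},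
        a (x : X) y / ‖(x : X)‖) :
    ∃ C : ℝ, 0 < C ∧
      ∀ (h : X →L[ℝ] ℝ) (g : Q →L[ℝ] ℝ),
        (∃! xp : X × Q,
          (∀ y : X, a xp.1 y + b y xp.2 = h y) ∧ ∀ q : Q, b xp.1 q = g q) ∧
        ∀ xp : X × Q,
          ((∀ y : X, a xp.1 y + b y xp.2 = h y) ∧ ∀ q : Q, b xp.1 q = g q) →
            ‖xp.1‖ + ‖xp.2‖ ≤ C * (‖h‖ + ‖g‖) := by
  classical
  -- nonnegative boundedness constants
  set Ca' : ℝ := max Ca 0 with hCa'def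
  set Cb' : ℝ := max Cb 0 with hCb'def
  have hCa'0 : (0:ℝ) ≤ Ca' := le_max_right _ _
  have hCb'0 : (0:ℝ) ≤ Cb' := le_max_right _ _
  have hCa' : ∀ x y : X, |a x y| ≤ Ca' * ‖x‖ * ‖y‖ := by
    intro x y
    refine (hCa x y).trans ?_
    have h1 : (0:ℝ) ≤ ‖x‖ * ‖y‖ := mul_nonneg (norm_nonneg _) (norm_nonneg _)
    have h2 : Ca ≤ Ca' := le_max_left _ _
    nlinarith
  have hCb' : ∀ (y : X) (q : Q), |b y q| ≤ Cb' * ‖y‖ * ‖q‖ := by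
    intro y q
    refine (hCb y q).trans ?_
    have h1 : (0:ℝ) ≤ ‖y‖ * ‖q‖ := mul_nonneg (norm_nonneg _) (norm_nonneg _)
    have h2 : Cb ≤ Cb' := le_max_left _ _
    nlinarith
  -- the bounded bilinear forms as continuous linear maps
  let A : X →L[ℝ] X →L[ℝ] ℝ := LinearMap.mkContinuous₂ a Ca'
    (fun x y => by rw [Real.norm_eq_abs]; exact hCa' x y)
  let B : X →L[ℝ] Q →L[ℝ] ℝ := LinearMap.mkContinuous₂ b Cb'
    (fun x q => by rw [Real.norm_eq_abs]; exact hCb' x q)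
  -- the operator `Bd : X →L Q`, `⟪Bd x, q⟫ = b x q`
  let Bd : X →L[ℝ] Q :=
    ((toDual ℝ Q).symm.toContinuousLinearEquiv.toContinuousLinearMap).comp B
  have hBd : ∀ (x : X) (q : Q), ⟪Bd x, q⟫ = b x q := by
    intro x q
    show ⟪(toDual ℝ Q).symm (B x), q⟫ = b x q
    rw [toDual_symm_apply]; rfl
  -- the operator `Bt : Q →L X`, `⟪Bt q, y⟫ = b y q`
  let Bt : Q →L[ℝ] X :=
    ((toDual ℝ X).symm.toContinuousLinearEquiv.toContinuousLinearMap).comp B.flip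
  have hBt : ∀ (q : Q) (y : X), ⟪Bt q, y⟫ = b y q := by
    intro q y
    show ⟪(toDual ℝ X).symm (B.flip q), y⟫ = b y q
    rw [toDual_symm_apply]; rfl
  -- `Bt` is bounded below
  have hBtlow : ∀ q : Q, β * ‖q‖ ≤ ‖Bt q‖ := by
    intro q
    refine (hb q).trans (Real.iSup_le ?_ (norm_nonneg _))
    rintro ⟨y, hy⟩
    have hy0 : (0:ℝ) < ‖y‖ := norm_pos_iff.mpr hy
    rw [div_le_iff₀ hy0, ← hBt q y]
    exact real_inner_le_norm _ _
  -- the subspace X₀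
  set X0 : Submodule ℝ X := LinearMap.ker (Bd : X →ₗ[ℝ] Q) with hX0def
  have hX0 : ∀ x : X, x ∈ X0 ↔ ∀ q : Q, b x q = 0 := by
    intro x
    constructor
    · intro hx q
      rw [← hBd x q]
      have hx' : Bd x = 0 := hx
      rw [hx', inner_zero_left]
    · intro hx
      have h0 : Bd x = 0 := by
        have h1 : ⟪Bd x, Bd x⟫ = 0 := by rw [hBd]; exact hx _
        exact inner_self_eq_zero.mp h1
      exact h0
  have hX0closed : IsClosed ((X0 : Submodule ℝ X) : Set X) :=
    ContinuousLinearMap.isClosed_ker Bd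
  haveI : CompleteSpace X0 := hX0closed.completeSpace_coe
  -- the operator `T : X0 →L X0` representing `a` on `X0`
  let T : X0 →L[ℝ] X0 :=
    ((toDual ℝ X0).symm.toContinuousLinearEquiv.toContinuousLinearMap).comp
      (((ContinuousLinearMap.compL ℝ X0 X ℝ).flip X0.subtypeL).comp (A.comp X0.subtypeL))
  have hT : ∀ x y : X0, ⟪T x, y⟫ = a (x : X) (y : X) := by
    intro x y
    show ⟪(toDual ℝ X0).symm ((A (x : X)).comp X0.subtypeL), y⟫ = a (x : X) (y : X)
    rw [toDual_symm_apply]; rfl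
  have hTlow : ∀ x : X0, α * ‖x‖ ≤ ‖T x‖ := by
    intro x
    have hx0 : (∀ q : Q, b (x : X) q = 0) := (hX0 _).mp x.2
    refine (ha₁ (x : X) hx0).trans (Real.iSup_le ?_ (norm_nonneg _))
    rintro ⟨y, hy1, hy2⟩
    have hy0 : (0:ℝ) < ‖y‖ := norm_pos_iff.mpr hy2
    rw [div_le_iff₀ hy0]
    have hyX0 : y ∈ X0 := (hX0 y).mpr hy1
    have h3 := real_inner_le_norm (T x) (⟨y, hyX0⟩ : X0)
    rw [hT x ⟨y, hyX0⟩] at h3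
    exact h3
  -- surjectivity of T
  have hTsurj : Function.Surjective T := by
    refine brezzi_aux_surj T α hα hTlow ?_
    intro y hy
    have hy0 : (∀ q : Q, b (y : X) q = 0) := (hX0 _).mp y.2
    have hsup := ha₂ (y : X) hy0
    have hle : (⨆ x : {x : X // (∀ q : Q, b x q = 0) ∧ x ≠ 0},
        a (x : X) (y : X) / ‖(x : X)‖) ≤ 0 := by
      refine Real.iSup_le ?_ le_rfl
      rintro ⟨x, hx1, hx2⟩
      have hxX0 : x ∈ X0 := (hX0 x).mpr hx1
      have h4 : a x (y : X) = 0 := by rw [← hT ⟨x, hxX0⟩ y]; exact hy ⟨x, hxX0⟩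
      simp [h4]
    have hn : ‖(y : X)‖ ≤ 0 := by nlinarith [norm_nonneg (y : X)]
    have h5 : ‖(y : X)‖ = 0 := le_antisymm hn (norm_nonneg _)
    exact ZeroMemClass.coe_eq_zero.mp (norm_eq_zero.mp h5)
  -- the operator `D = Bd ∘ Bt : Q →L Q`
  let D : Q →L[ℝ] Q := Bd.comp Bt
  have hD : ∀ q q' : Q, ⟪D q, q'⟫ = b (Bt q) q' := fun q q' => hBd (Bt q) q'
  have hDlow : ∀ q : Q, (β * β) * ‖q‖ ≤ ‖D q‖ := by
    intro q
    by_cases h0 : ‖q‖ = 0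
    · rw [h0, mul_zero]; exact norm_nonneg _
    · have hq0 : (0:ℝ) < ‖q‖ := lt_of_le_of_ne (norm_nonneg _) (Ne.symm h0)
      have h1 : ⟪D q, q⟫ = ‖Bt q‖ * ‖Bt q‖ := by
        rw [hD, ← hBt q (Bt q)]; exact real_inner_self_eq_norm_mul_norm _
      have h4 : ⟪D q, q⟫ ≤ ‖D q‖ * ‖q‖ := real_inner_le_norm _ _
      have hb2 := hBtlow q
      have h5 : (β * β * ‖q‖) * ‖q‖ ≤ ‖D q‖ * ‖q‖ := by
        nlinarith [mul_nonneg hβ.le (norm_nonneg q)]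
      exact le_of_mul_le_mul_right h5 hq0
  have hDsurj : Function.Surjective D := by
    refine brezzi_aux_surj D (β * β) (by positivity) hDlow ?_
    intro y hy
    have h1 : ⟪Bt y, Bt y⟫ = 0 := by
      have h2 := hy y
      rw [hD, ← hBt y (Bt y)] at h2
      exact h2
    have h2 : Bt y = 0 := inner_self_eq_zero.mp h1
    have h3 : β * ‖y‖ ≤ 0 := by
      have h4 := hBtlow y
      rw [h2, norm_zero] at h4
      exact h4
    have h5 : ‖y‖ = 0 := le_antisymm (by nlinarith [norm_nonneg y]) (norm_nonneg _)
    exact norm_eq_zero.mp h5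
  -- range of Bt is closed, and equals X0ᗮ
  have hBtanti : AntilipschitzWith (β⁻¹).toNNReal Bt := by
    refine Bt.antilipschitz_of_bound fun q => ?_
    rw [Real.coe_toNNReal _ (by positivity), inv_mul_eq_div, le_div_iff₀ hβ]
    linarith [hBtlow q]
  have hBtclosed : IsClosed ((LinearMap.range (Bt : Q →ₗ[ℝ] X) : Submodule ℝ X) : Set X) := by
    rw [LinearMap.coe_range]
    exact hBtanti.isClosed_range Bt.uniformContinuous
  haveI : CompleteSpace (LinearMap.range (Bt : Q →ₗ[ℝ] X) : Submodule ℝ X) := hBtclosed.completeSpace_coe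
  have hRBorth : (LinearMap.range (Bt : Q →ₗ[ℝ] X))ᗮ = X0 := by
    ext y
    constructor
    · intro hy
      refine (hX0 y).mpr fun q => ?_
      rw [← hBt q y]
      exact (Submodule.mem_orthogonal _ y).mp hy (Bt q) (LinearMap.mem_range_self _ q)
    · intro hy
      rw [Submodule.mem_orthogonal]
      rintro u ⟨q, rfl⟩
      rw [ContinuousLinearMap.coe_coe, hBt]
      exact (hX0 y).mp hy q
  have hX0orth : X0ᗮ = LinearMap.range (Bt : Q →ₗ[ℝ] X) := by
    rw [← hRBorth]
    exact Submodule.orthogonal_orthogonal _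
  -- the constants
  set K₁ : ℝ := 1/α + (Ca'/α + 1)/β with hK₁def
  have hK₁pos : 0 < K₁ := by rw [hK₁def]; positivity
  set K₂ : ℝ := (1 + Ca' * K₁)/β with hK₂def
  have hK₂pos : 0 < K₂ := by rw [hK₂def]; positivity
  refine ⟨K₁ + K₂, by positivity, ?_⟩
  -- the a priori estimate, for any solution of the mixed problem
  have est : ∀ (h : X →L[ℝ] ℝ) (g : Q →L[ℝ] ℝ) (x : X) (p : Q),
      (∀ y : X, a x y + b y p = h y) → (∀ q : Q, b x q = g q) →
      ‖x‖ + ‖p‖ ≤ (K₁ + K₂) * (‖h‖ + ‖g‖) := by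
    intro h g x p h1 h2
    set H : ℝ := ‖h‖ + ‖g‖ with hHdef
    have hH0 : 0 ≤ H := by rw [hHdef]; positivity
    have hhH : ‖h‖ ≤ H := by rw [hHdef]; linarith [norm_nonneg g]
    have hgH : ‖g‖ ≤ H := by rw [hHdef]; linarith [norm_nonneg h]
    obtain ⟨x₀, hx₀mem, x₁, hx₁mem, hxsum⟩ := X0.exists_add_mem_mem_orthogonal x
    have horth : ⟪x₁, x₀⟫ = 0 := by
      rw [real_inner_comm]
      exact (Submodule.mem_orthogonal X0 x₁).mp hx₁mem x₀ hx₀mem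
    -- bound on x₁
    have hx₁ : β * ‖x₁‖ ≤ ‖g‖ := by
      rw [hX0orth] at hx₁mem
      obtain ⟨s, hs⟩ := hx₁mem
      have e0 : ⟪x₁, x⟫ = ‖x₁‖ * ‖x₁‖ := by
        rw [hxsum, inner_add_right, horth, real_inner_self_eq_norm_mul_norm, zero_add]
      have e1 : ‖x₁‖ * ‖x₁‖ = g s := by
        calc ‖x₁‖ * ‖x₁‖ = ⟪x₁, x⟫ := e0.symm
          _ = b x s := by rw [← hs]; exact hBt s x
          _ = g s := h2 s
      have e2 : ‖x₁‖ * ‖x₁‖ ≤ ‖g‖ * ‖s‖ := by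
        rw [e1]
        calc g s ≤ |g s| := le_abs_self _
          _ = ‖g s‖ := (Real.norm_eq_abs _).symm
          _ ≤ ‖g‖ * ‖s‖ := g.le_opNorm s
      have e3 : β * ‖s‖ ≤ ‖x₁‖ := by rw [← hs]; exact hBtlow s
      by_cases h0 : ‖x₁‖ = 0
      · rw [h0, mul_zero]; exact norm_nonneg _
      · have hpos : 0 < ‖x₁‖ := lt_of_le_of_ne (norm_nonneg _) (Ne.symm h0)
        have e4 : (β * ‖x₁‖) * ‖x₁‖ ≤ ‖g‖ * ‖x₁‖ := by
          nlinarith [mul_le_mul_of_nonneg_left e2 hβ.le,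
            mul_le_mul_of_nonneg_left e3 (norm_nonneg g)]
        exact le_of_mul_le_mul_right e4 hpos
    -- bound on x₀
    have hx₀ : α * ‖x₀‖ ≤ ‖h‖ + Ca' * ‖x₁‖ := by
      set x0' : X0 := ⟨x₀, hx₀mem⟩ with hx0'def
      set w : X0 := T x0' with hwdef
      have hw : ∀ y : X0, ⟪w, y⟫ = h (y : X) - a x₁ (y : X) := by
        intro y
        have hy0 : b (y : X) p = 0 := (hX0 _).mp y.2 p
        have h1y : a x (y : X) + b (y : X) p = h (y : X) := h1 (y : X)
        have hax : a x (y : X) = a x₀ (y : X) + a x₁ (y : X) := by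
          rw [hxsum, map_add]; rfl
        rw [hwdef, hT x0' y]
        show a x₀ (y : X) = h (y : X) - a x₁ (y : X)
        rw [hy0, add_zero] at h1y
        linarith
      have hnw : ‖(w : X)‖ = ‖w‖ := rfl
      have hwnorm : ‖w‖ ≤ ‖h‖ + Ca' * ‖x₁‖ := by
        refine brezzi_aux_sq (norm_nonneg _) (by positivity) ?_
        have e0 : ⟪w, w⟫ = ‖w‖ * ‖w‖ := real_inner_self_eq_norm_mul_norm _
        have e1 := hw w
        have e2 : h (w : X) ≤ ‖h‖ * ‖w‖ := by
          calc h (w : X) ≤ |h (w : X)| := le_abs_self _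
            _ = ‖h (w : X)‖ := (Real.norm_eq_abs _).symm
            _ ≤ ‖h‖ * ‖(w : X)‖ := h.le_opNorm _
            _ = ‖h‖ * ‖w‖ := by rw [hnw]
        have e3 : -(a x₁ (w : X)) ≤ Ca' * ‖x₁‖ * ‖w‖ := by
          have e4 := hCa' x₁ (w : X)
          have e5 : -(a x₁ (w : X)) ≤ |a x₁ (w : X)| := neg_le_abs _
          rw [hnw] at e4
          linarith
        nlinarith [e0, e1, e2, e3]
      calc α * ‖x₀‖ = α * ‖x0'‖ := rfl
        _ ≤ ‖T x0'‖ := hTlow x0'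
        _ = ‖w‖ := by rw [← hwdef]
        _ ≤ ‖h‖ + Ca' * ‖x₁‖ := hwnorm
    -- bound on p
    have hp : β * ‖p‖ ≤ ‖h‖ + Ca' * ‖x‖ := by
      have e0 : ‖Bt p‖ * ‖Bt p‖ = b (Bt p) p := by
        rw [← real_inner_self_eq_norm_mul_norm]; exact hBt p (Bt p)
      have e1 : b (Bt p) p = h (Bt p) - a x (Bt p) := by linarith [h1 (Bt p)]
      have e2 : h (Bt p) ≤ ‖h‖ * ‖Bt p‖ := by
        calc h (Bt p) ≤ |h (Bt p)| := le_abs_self _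
          _ = ‖h (Bt p)‖ := (Real.norm_eq_abs _).symm
          _ ≤ ‖h‖ * ‖Bt p‖ := h.le_opNorm _
      have e3 : -(a x (Bt p)) ≤ Ca' * ‖x‖ * ‖Bt p‖ := by
        have e4 := hCa' x (Bt p)
        have e5 : -(a x (Bt p)) ≤ |a x (Bt p)| := neg_le_abs _
        linarith
      have e6 : ‖Bt p‖ ≤ ‖h‖ + Ca' * ‖x‖ :=
        brezzi_aux_sq (norm_nonneg _) (by positivity) (by nlinarith [e0, e1, e2, e3])
      linarith [hBtlow p]
    -- combine
    have hxb : ‖x‖ ≤ K₁ * H := by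
      have e1 : ‖x₁‖ ≤ H / β := by rw [le_div_iff₀ hβ]; nlinarith [hx₁, hgH]
      have e2 : ‖x₀‖ ≤ (H + Ca' * ‖x₁‖) / α := by rw [le_div_iff₀ hα]; nlinarith [hx₀, hhH]
      have e3 : ‖x‖ ≤ ‖x₀‖ + ‖x₁‖ := by rw [hxsum]; exact norm_add_le _ _
      have e4 : (H + Ca' * ‖x₁‖) / α ≤ (H + Ca' * (H/β)) / α := by gcongr
      have e5 : (H + Ca' * (H/β)) / α + H/β = K₁ * H := by
        rw [hK₁def]; field_simp; ring
      exact le_of_le_of_eq (le_trans e3 (add_le_add (e2.trans e4) e1)) e5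
    have hpb : ‖p‖ ≤ K₂ * H := by
      have e1 : ‖p‖ ≤ (H + Ca' * ‖x‖) / β := by rw [le_div_iff₀ hβ]; nlinarith [hp, hhH]
      have e2 : (H + Ca' * ‖x‖) / β ≤ (H + Ca' * (K₁ * H)) / β := by gcongr
      have e3 : (H + Ca' * (K₁ * H)) / β = K₂ * H := by
        rw [hK₂def]; field_simp
      exact le_of_le_of_eq (e1.trans e2) e3
    calc ‖x‖ + ‖p‖ ≤ K₁ * H + K₂ * H := add_le_add hxb hpb
      _ = (K₁ + K₂) * H := by ring
  intro h g
  -- existence: first solve the b-part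
  obtain ⟨s, hs⟩ := hDsurj ((toDual ℝ Q).symm g)
  set x₁ : X := Bt s with hx₁def
  have hgs : ∀ q : Q, b x₁ q = g q := by
    intro q
    have hDs : ⟪D s, q⟫ = g q := by rw [hs]; exact toDual_symm_apply
    rw [hx₁def, ← hD s q]
    exact hDs
  -- then solve the a-part on X0
  obtain ⟨x0, hx0⟩ := hTsurj ((toDual ℝ X0).symm ((h - A x₁).comp X0.subtypeL))
  have hax0 : ∀ y : X0, a (x0 : X) (y : X) = h (y : X) - a x₁ (y : X) := by
    intro y
    rw [← hT x0 y, hx0, toDual_symm_apply]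
    rfl
  set x : X := (x0 : X) + x₁ with hxdef
  have hbx : ∀ q : Q, b x q = g q := by
    intro q
    rw [hxdef, map_add, LinearMap.add_apply, (hX0 _).mp x0.2 q, hgs q, zero_add]
  have haxX0 : ∀ y : X0, a x (y : X) = h (y : X) := by
    intro y
    rw [hxdef, map_add, LinearMap.add_apply, hax0 y]; ring
  -- then find p
  set z : X := (toDual ℝ X).symm (h - A x) with hzdef
  have hz : ∀ y : X, ⟪z, y⟫ = h y - a x y := by
    intro y
    rw [hzdef, toDual_symm_apply]
    rfl
  have hzorth : z ∈ X0ᗮ := by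
    rw [Submodule.mem_orthogonal]
    intro u hu
    have h5 : a x u = h u := haxX0 ⟨u, hu⟩
    rw [real_inner_comm, hz u, h5]; ring
  rw [hX0orth] at hzorth
  obtain ⟨p, hpz⟩ := hzorth
  have hax : ∀ y : X, a x y + b y p = h y := by
    intro y
    have h6 : b y p = h y - a x y := by rw [← hBt p y, show Bt p = z from hpz]; exact hz y
    linarith
  constructor
  · refine ⟨(x, p), ⟨hax, hbx⟩, ?_⟩
    rintro ⟨x', p'⟩ ⟨hax', hbx'⟩
    have hzero : ‖x' - x‖ + ‖p' - p‖ ≤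
        (K₁ + K₂) * (‖(0 : X →L[ℝ] ℝ)‖ + ‖(0 : Q →L[ℝ] ℝ)‖) := by
      refine est 0 0 (x' - x) (p' - p) ?_ ?_
      · intro y
        simp only [ContinuousLinearMap.zero_apply]
        have d1 : a (x' - x) y = a x' y - a x y := by rw [map_sub]; rfl
        have d2 : b y (p' - p) = b y p' - b y p := map_sub (b y) _ _
        linarith [hax' y, hax y]
      · intro q
        simp only [ContinuousLinearMap.zero_apply]
        have d1 : b (x' - x) q = b x' q - b x q := by rw [map_sub]; rfl
        linarith [hbx' q, hbx q]
    rw [norm_zero, norm_zero, add_zero, mul_zero] at hzero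
    have n1 : ‖x' - x‖ = 0 :=
      le_antisymm (by linarith [norm_nonneg (p' - p)]) (norm_nonneg _)
    have n2 : ‖p' - p‖ = 0 :=
      le_antisymm (by linarith [norm_nonneg (x' - x)]) (norm_nonneg _)
    have hx' : x' = x := sub_eq_zero.mp (norm_eq_zero.mp n1)
    have hp' : p' = p := sub_eq_zero.mp (norm_eq_zero.mp n2)
    simp only [Prod.mk.injEq]
    exact ⟨hx', hp'⟩
  · rintro ⟨x', p'⟩ ⟨hax', hbx'⟩
    exact est h g x' p' hax' hbx'
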